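/- Let (x̃_n)_{n≥0} be a sequence in Kˣ such that x̃_{n+1}^p · x̃_n^{-1} ∈ q^ℤ for all n. Then the sequence of classes (x̃_n^{p^n} mod q'^ℤ)_{n≥0} converges in the quotient topological group Kˣ/q'^ℤ. -/

import Mathlib

section AuxUlt

variable {K : Type*} [NormedField K]

private lemma aux_nat_norm_le (hu : ∀ a b : K, ‖a + b‖ ≤ max ‖a‖ ‖b‖) (n : ℕ) :
    ‖(n : K)‖ ≤ 1 := by
  induction n with
  | zero => simp
  | succ n ih =>
    push_cast
    exact (hu _ _).trans (by simp [ih])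

private lemma aux_norm_eq_one (hu : ∀ a b : K, ‖a + b‖ ≤ max ‖a‖ ‖b‖) {y : K}
    (hy : ‖y - 1‖ < 1) : ‖y‖ = 1 := by
  have h1 : ‖y‖ ≤ 1 := by
    have := hu (y - 1) 1
    simp only [sub_add_cancel, norm_one] at this
    exact this.trans (by simp [hy.le])
  have h2 : (1 : ℝ) ≤ ‖y‖ := by
    by_contra h
    push_neg at h
    have := hu y (1 - y)
    simp only [add_sub_cancel, norm_one] at this
    rw [← neg_sub, norm_neg] at hy
    have := this.trans_lt (max_lt h hy)
    exact lt_irrefl _ this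
  linarith

private lemma aux_pow_sub_one (hu : ∀ a b : K, ‖a + b‖ ≤ max ‖a‖ ‖b‖) {y : K} {ε : ℝ}
    (hy1 : ‖y‖ ≤ 1) (hy : ‖y - 1‖ ≤ ε) (n : ℕ) : ‖y ^ n - 1‖ ≤ ε := by
  induction n with
  | zero => simpa using (norm_nonneg (y - 1)).trans hy
  | succ n ih =>
    have : y ^ (n + 1) - 1 = y * (y ^ n - 1) + (y - 1) := by ring
    rw [this]
    refine (hu _ _).trans (max_le ?_ hy)
    rw [norm_mul]
    calc ‖y‖ * ‖y ^ n - 1‖ ≤ 1 * ε := by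
          exact mul_le_mul hy1 ih (norm_nonneg _) zero_le_one
    _ = ε := one_mul ε

private lemma aux_zpow_sub_one (hu : ∀ a b : K, ‖a + b‖ ≤ max ‖a‖ ‖b‖) {u : Kˣ} {ε : ℝ}
    (hε : ε < 1) (hy : ‖(u : K) - 1‖ ≤ ε) (k : ℤ) : ‖((u ^ k : Kˣ) : K) - 1‖ ≤ ε := by
  have hone : ‖(u : K)‖ = 1 := aux_norm_eq_one hu (hy.trans_lt hε)
  have hnat : ∀ n : ℕ, ‖((u ^ n : Kˣ) : K) - 1‖ ≤ ε := by
    intro n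
    rw [Units.val_pow_eq_pow_val]
    exact aux_pow_sub_one hu hone.le hy n
  induction k using Int.rec with
  | ofNat n => rw [Int.ofNat_eq_natCast, zpow_natCast]; exact hnat n
  | negSucc n =>
    have h1 : ‖((u ^ (n + 1) : Kˣ) : K)‖ = 1 := by
      rw [Units.val_pow_eq_pow_val, norm_pow, hone, one_pow]
    have key : ((u ^ Int.negSucc n : Kˣ) : K) - 1
        = ((u ^ (n + 1) : Kˣ) : K)⁻¹ * (1 - ((u ^ (n + 1) : Kˣ) : K)) := by
      rw [zpow_negSucc]
      field_simp
      simp [sub_mul]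
    rw [key, norm_mul, norm_inv, h1, inv_one, one_mul, ← neg_sub, norm_neg]
    exact hnat (n + 1)

private lemma aux_sum_norm_le (hu : ∀ a b : K, ‖a + b‖ ≤ max ‖a‖ ‖b‖)
    {ι : Type*} (s : Finset ι) (f : ι → K) {B : ℝ} (hB : 0 ≤ B)
    (h : ∀ i ∈ s, ‖f i‖ ≤ B) : ‖∑ i ∈ s, f i‖ ≤ B := by
  classical
  induction s using Finset.cons_induction with
  | empty => simpa using hB
  | cons a s ha ih =>
    rw [Finset.sum_cons]
    refine (hu _ _).trans (max_le (h a (Finset.mem_cons_self a s)) ?_)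
    exact ih fun i hi => h i (Finset.mem_cons_of_mem hi)

private lemma aux_prime_pow (hu : ∀ a b : K, ‖a + b‖ ≤ max ‖a‖ ‖b‖)
    {p : ℕ} (hp : p.Prime) {y : K} (hy : ‖y - 1‖ < 1) :
    ‖y ^ p - 1‖ ≤ max ‖(p : K)‖ ‖y - 1‖ * ‖y - 1‖ := by
  set w := y - 1 with hw
  have hyw : y = w + 1 := by rw [hw]; ring
  have hexp : y ^ p - 1 = ∑ i ∈ Finset.Ico 1 (p + 1), w ^ i * (p.choose i : K) := by
    rw [hyw, add_pow]
    simp only [one_pow, mul_one]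
    rw [← Finset.sum_range_add_sum_Ico _ (Nat.le_add_left 1 p)]
    simp [Finset.sum_range_one]
  rw [hexp]
  refine aux_sum_norm_le hu _ _ ?_ ?_
  · positivity
  · intro i hi
    rw [Finset.mem_Ico] at hi
    obtain ⟨hi1, hi2⟩ := hi
    have hi2' : i ≤ p := Nat.lt_succ_iff.mp hi2
    rcases eq_or_lt_of_le hi2' with heq | hlt
    · subst heq
      rw [Nat.choose_self]
      push_cast
      rw [mul_one, norm_pow]
      calc ‖w‖ ^ i ≤ ‖w‖ ^ 2 := pow_le_pow_of_le_one (norm_nonneg _) hy.le hp.two_le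
      _ = ‖w‖ * ‖w‖ := sq ‖w‖
      _ ≤ max ‖(i : K)‖ ‖w‖ * ‖w‖ :=
          mul_le_mul_of_nonneg_right (le_max_right _ _) (norm_nonneg _)
    · have hdvd : p ∣ p.choose i := hp.dvd_choose_self (Nat.one_le_iff_ne_zero.mp hi1) hlt
      obtain ⟨m, hm⟩ := hdvd
      have hm' : ((p.choose i : ℕ) : K) = (p : K) * (m : K) := by rw [hm]; push_cast; ring
      rw [norm_mul, hm', norm_mul]
      have h1 : ‖w‖ ^ i ≤ ‖w‖ := by
        calc ‖w‖ ^ i ≤ ‖w‖ ^ 1 := pow_le_pow_of_le_one (norm_nonneg _) hy.le hi1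
        _ = ‖w‖ := pow_one _
      have h2 : ‖(p : K)‖ * ‖(m : K)‖ ≤ ‖(p : K)‖ := by
        calc ‖(p : K)‖ * ‖(m : K)‖ ≤ ‖(p : K)‖ * 1 := by
              exact mul_le_mul_of_nonneg_left (aux_nat_norm_le hu m) (norm_nonneg _)
        _ = ‖(p : K)‖ := mul_one _
      calc ‖w ^ i‖ * (‖(p : K)‖ * ‖(m : K)‖) ≤ ‖w‖ * ‖(p : K)‖ := by
            refine mul_le_mul ?_ h2 (by positivity) (norm_nonneg _)
            rw [norm_pow]; exact h1
      _ = ‖(p : K)‖ * ‖w‖ := mul_comm _ _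
      _ ≤ max ‖(p : K)‖ ‖w‖ * ‖w‖ :=
          mul_le_mul_of_nonneg_right (le_max_left _ _) (norm_nonneg _)

private lemma aux_iter (hu : ∀ a b : K, ‖a + b‖ ≤ max ‖a‖ ‖b‖)
    {p : ℕ} (hp : p.Prime) (hpK : ‖(p : K)‖ < 1) {y : K} (hy : ‖y - 1‖ < 1) (n : ℕ) :
    ‖y ^ p ^ n - 1‖ ≤ max ‖(p : K)‖ ‖y - 1‖ ^ n * ‖y - 1‖ := by
  set c := max ‖(p : K)‖ ‖y - 1‖ with hc
  have hc0 : 0 ≤ c := le_trans (norm_nonneg _) (le_max_left _ _)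
  have hc1 : c < 1 := max_lt hpK hy
  induction n with
  | zero => simp
  | succ n ih =>
    have hcn : c ^ n * ‖y - 1‖ ≤ ‖y - 1‖ := by
      calc c ^ n * ‖y - 1‖ ≤ 1 * ‖y - 1‖ :=
        mul_le_mul_of_nonneg_right (pow_le_one₀ hc0 hc1.le) (norm_nonneg _)
      _ = ‖y - 1‖ := one_mul _
    have ha : ‖y ^ p ^ n - 1‖ < 1 := lt_of_le_of_lt (ih.trans hcn) hy
    have key := aux_prime_pow hu hp ha
    rw [pow_succ, pow_mul]
    refine key.trans ?_
    have hmax : max ‖(p : K)‖ ‖y ^ p ^ n - 1‖ ≤ c :=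
      max_le (le_max_left _ _) ((ih.trans hcn).trans (le_max_right _ _))
    calc max ‖(p : K)‖ ‖y ^ p ^ n - 1‖ * ‖y ^ p ^ n - 1‖
        ≤ c * (c ^ n * ‖y - 1‖) := by
          refine mul_le_mul hmax ih (norm_nonneg _) hc0
    _ = c ^ (n + 1) * ‖y - 1‖ := by ring

end AuxUlt

/-- Let `K` be a complete nonarchimedean normed field with `‖p‖ < 1`, let
`q' ∈ Kˣ` with `‖q'‖ < 1`, `z` with `‖z - 1‖ < 1` and `q = q'·z`. If `(x̃ₙ)` is a
sequence of units with `x̃_{n+1}^p · x̃ₙ⁻¹ ∈ q^ℤ` for all `n`, then the classes of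
`x̃ₙ^{pⁿ}` converge in the quotient topological group `Kˣ/q'^ℤ`. -/
theorem tendsto_pow_prime_pow_mod_zpowers (K : Type*) [NormedField K] [CompleteSpace K]
    (hu : ∀ a b : K, ‖a + b‖ ≤ max ‖a‖ ‖b‖)
    (p : ℕ) (hp : p.Prime) (hpK : ‖(p : K)‖ < 1)
    (q' : Kˣ) (hq' : ‖(q' : K)‖ < 1)
    (z : K) (hz : ‖z - 1‖ < 1)
    (q : Kˣ) (hq : (q : K) = (q' : K) * z)
    (x : ℕ → Kˣ)
    (hx : ∀ n : ℕ, x (n + 1) ^ p * (x n)⁻¹ ∈ Subgroup.zpowers q) :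
    ∃ L : Kˣ ⧸ Subgroup.zpowers q',
      Filter.Tendsto
        (fun n : ℕ => (QuotientGroup.mk (x n ^ p ^ n) : Kˣ ⧸ Subgroup.zpowers q'))
        Filter.atTop (nhds L) := by
  classical
  choose k hk using fun n => Subgroup.mem_zpowers_iff.mp (hx n)
  -- hk : ∀ n, q ^ k n = x (n + 1) ^ p * (x n)⁻¹
  set ζ : Kˣ := q'⁻¹ * q with hζdef
  have hζval : (ζ : K) = z := by
    rw [hζdef, Units.val_mul, hq, Units.val_inv_eq_inv_val,
      inv_mul_cancel_left₀ q'.ne_zero]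
  have hqζ : q = q' * ζ := by rw [hζdef, mul_inv_cancel_left]
  set w : ℝ := ‖z - 1‖ with hwdef
  set c : ℝ := max ‖(p : K)‖ w with hcdef
  have hc0 : 0 ≤ c := le_trans (norm_nonneg _) (le_max_left _ _)
  have hc1 : c < 1 := max_lt hpK hz
  have hw0 : 0 ≤ w := norm_nonneg _
  have hw1 : w < 1 := hz
  set m : ℕ → ℤ := fun n => ∑ j ∈ Finset.range n, k j * (p ^ j : ℤ) with hmdef
  set E : ℕ → ℤ := fun n => k n * (p ^ n : ℤ) with hEdef
  set u : ℕ → Kˣ := fun n => x n ^ p ^ n * q' ^ (-(m n)) with hudef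
  -- the recursion
  have hstep : ∀ n, u (n + 1) = u n * ζ ^ E n := by
    intro n
    have hx1 : x (n + 1) ^ p = q ^ k n * x n := by
      rw [hk n, inv_mul_cancel_right]
    have hpow : x (n + 1) ^ p ^ (n + 1) = q ^ E n * x n ^ p ^ n := by
      rw [pow_succ', pow_mul, hx1, mul_pow, ← zpow_natCast (q ^ k n) (p ^ n),
        ← zpow_mul, hEdef]
      push_cast
      ring_nf
    have hmsucc : m (n + 1) = m n + E n := Finset.sum_range_succ _ n
    simp only [hudef, hpow, hqζ, mul_zpow, hmsucc]
    have hq'E : (q' : Kˣ) ^ E n * q' ^ (-(m n + E n)) = q' ^ (-(m n)) := by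
      rw [← zpow_add]
      congr 1
      ring
    calc q' ^ E n * ζ ^ E n * x n ^ p ^ n * q' ^ (-(m n + E n))
        = ζ ^ E n * x n ^ p ^ n * (q' ^ E n * q' ^ (-(m n + E n))) := by
          simp only [mul_comm, mul_left_comm, mul_assoc]
    _ = ζ ^ E n * x n ^ p ^ n * q' ^ (-(m n)) := by rw [hq'E]
    _ = x n ^ p ^ n * q' ^ (-(m n)) * ζ ^ E n := by
          simp only [mul_comm, mul_left_comm, mul_assoc]
  -- norm estimates
  have hζE : ∀ n, ‖((ζ ^ E n : Kˣ) : K) - 1‖ ≤ c ^ n * w := by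
    intro n
    have hεlt : c ^ n * w < 1 := by
      calc c ^ n * w ≤ 1 * w :=
        mul_le_mul_of_nonneg_right (pow_le_one₀ hc0 hc1.le) hw0
      _ = w := one_mul w
      _ < 1 := hw1
    have hbase : ‖((ζ ^ p ^ n : Kˣ) : K) - 1‖ ≤ c ^ n * w := by
      rw [Units.val_pow_eq_pow_val, hζval]
      exact aux_iter hu hp hpK hz n
    have hsplit : ζ ^ E n = (ζ ^ p ^ n) ^ k n := by
      simp only [hEdef]
      rw [mul_comm (k n) ((p ^ n : ℤ)), zpow_mul]
      congr 1
    rw [hsplit]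
    exact aux_zpow_sub_one hu hεlt hbase (k n)
  have hζE1 : ∀ n, ‖((ζ ^ E n : Kˣ) : K)‖ = 1 := by
    intro n
    refine aux_norm_eq_one hu ?_
    calc ‖((ζ ^ E n : Kˣ) : K) - 1‖ ≤ c ^ n * w := hζE n
    _ ≤ 1 * w := mul_le_mul_of_nonneg_right (pow_le_one₀ hc0 hc1.le) hw0
    _ = w := one_mul w
    _ < 1 := hw1
  have hconst : ∀ n, ‖((u n : Kˣ) : K)‖ = ‖((u 0 : Kˣ) : K)‖ := by
    intro n
    induction n with
    | zero => rfl
    | succ n ih =>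
      rw [hstep n, Units.val_mul, norm_mul, hζE1 n, mul_one, ih]
  -- Cauchy sequence
  set v : ℕ → K := fun n => ((u n : Kˣ) : K) with hvdef
  have hdist : ∀ n, dist (v n) (v (n + 1)) ≤ (‖v 0‖ * w) * c ^ n := by
    intro n
    have hval : v (n + 1) = v n * ((ζ ^ E n : Kˣ) : K) := by
      simp only [hvdef, hstep n, Units.val_mul]
    rw [dist_eq_norm]
    have : v n - v (n + 1) = -(v n * (((ζ ^ E n : Kˣ) : K) - 1)) := by
      rw [hval]; ring
    rw [this, norm_neg, norm_mul]
    have hvn : ‖v n‖ = ‖v 0‖ := hconst n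
    rw [hvn]
    calc ‖v 0‖ * ‖((ζ ^ E n : Kˣ) : K) - 1‖ ≤ ‖v 0‖ * (c ^ n * w) :=
      mul_le_mul_of_nonneg_left (hζE n) (norm_nonneg _)
    _ = (‖v 0‖ * w) * c ^ n := by ring
  have hcauchy : CauchySeq v := cauchySeq_of_le_geometric c (‖v 0‖ * w) hc1 hdist
  obtain ⟨t, ht⟩ := cauchySeq_tendsto_of_complete hcauchy
  -- t is nonzero
  have hnormt : ‖t‖ = ‖v 0‖ := by
    have h1 : Filter.Tendsto (fun n => ‖v n‖) Filter.atTop (nhds ‖t‖) := ht.norm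
    have h2 : (fun n => ‖v n‖) = fun _ => ‖v 0‖ := funext fun n => hconst n
    rw [h2] at h1
    exact tendsto_nhds_unique h1 tendsto_const_nhds
  have ht0 : t ≠ 0 := by
    rw [← norm_ne_zero_iff, hnormt, hvdef]
    simpa using (u 0).ne_zero
  set T : Kˣ := Units.mk0 t ht0 with hTdef
  have hUtend : Filter.Tendsto u Filter.atTop (nhds T) := by
    rw [Units.isEmbedding_val₀.tendsto_nhds_iff]
    simp [hTdef]
    exact ht
  -- pass to the quotient
  refine ⟨QuotientGroup.mk T, ?_⟩
  have hmkeq : (fun n : ℕ => (QuotientGroup.mk (x n ^ p ^ n) : Kˣ ⧸ Subgroup.zpowers q'))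
      = fun n : ℕ => (QuotientGroup.mk (u n) : Kˣ ⧸ Subgroup.zpowers q') := by
    funext n
    refine (QuotientGroup.eq).mpr ?_
    have : (x n ^ p ^ n)⁻¹ * u n = q' ^ (-(m n)) := by
      simp only [hudef]
      rw [inv_mul_cancel_left]
    rw [this]
    exact Subgroup.mem_zpowers_iff.mpr ⟨-(m n), rfl⟩
  rw [hmkeq]
  have hcont : Continuous (QuotientGroup.mk : Kˣ → Kˣ ⧸ Subgroup.zpowers q') :=
    continuous_quotient_mk'
  exact (hcont.tendsto T).comp hUtend
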